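/- arXiv:1405.1484 — 5 statements merged into one kernel-verified Lean document; each statement's English description precedes it below -/
import Mathlib

section
/- Let n ≥ 3 be a prime and let G be the graph of Construction 1. For each i ∈ [n−1], the set Q_i = {w_{i,1},…,w_{i,n}} is an independent set of the square G² of G; that is, no two distinct vertices of Q_i have a common neighbor in G. -/
open SimpleGraph

/-- Entry of the Latin square `L_i`:  `L_i(j,k) ≡ j + i·(k-1) (mod n)`, with
indices and entries taken in `ZMod n` (identifying `[n] = {1,…,n}` with `ZMod n`). -/
def latinL (n : ℕ) (i j k : ZMod n) : ZMod n := j + i * (k - 1)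

/-- The vertices of the graph `G` of Construction 1:
`pv k m l` is `v_{k,m}^l ∈ P`, `qv i j` is `w_{i,j} ∈ Q` (with `i ≠ 0`, i.e. `i ∈ [n-1]`),
`rv i j` is `u_{i,j} ∈ R`, and `sv m` is `s_m ∈ S`. -/
inductive Vert (n : ℕ) : Type
  | pv (k m l : ZMod n) : Vert n
  | qv (i : {x : ZMod n // x ≠ 0}) (j : ZMod n) : Vert n
  | rv (i : {x : ZMod n // x ≠ 0}) (j : ZMod n) : Vert n
  | sv (m : ZMod n) : Vert n

/-- One-directional description of the edges of Construction 1: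
`w_{i,j}` is adjacent to `v_{k, L_i(j,k)}^l` for all `k, l`;
`u_{i,j}` is adjacent to every vertex of `T_{l, L_i(j,l)}` for every `l`;
`s_m` is adjacent to every vertex of `T_{l,m}` for every `l`. -/
def rel {n : ℕ} : Vert n → Vert n → Prop
  | .qv i j, .pv k m _ => m = latinL n i.1 j k
  | .rv i j, .pv _ m l => m = latinL n i.1 j l
  | .sv m', .pv _ m _ => m = m'
  | _, _ => False

/-- The bipartite graph `G` of Construction 1. -/
def GraphG (n : ℕ) : SimpleGraph (Vert n) where
  Adj x y := rel x y ∨ rel y x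
  symm := ⟨fun _ _ h => h.symm⟩
  loopless := ⟨by intro x h; cases x <;> simp [rel] at h⟩

/-- The square `G²` of a graph `G`: two distinct vertices are adjacent iff
their distance in `G` is at most 2 (i.e. they are adjacent or have a common neighbor). -/
def square {V : Type*} (G : SimpleGraph V) : SimpleGraph V where
  Adj x y := x ≠ y ∧ (G.Adj x y ∨ ∃ z, G.Adj x z ∧ G.Adj z y)
  symm := ⟨by
    rintro x y ⟨hxy, h | ⟨z, h1, h2⟩⟩
    · exact ⟨hxy.symm, Or.inl h.symm⟩
    · exact ⟨hxy.symm, Or.inr ⟨z, h2.symm, h1.symm⟩⟩⟩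
  loopless := ⟨fun x h => h.1 rfl⟩

/-- `P_k^l = {v_{k,1}^l, …, v_{k,n}^l}`. -/
def Pkl (n : ℕ) (k l : ZMod n) : Set (Vert n) := {x | ∃ m, x = Vert.pv k m l}

/-- `P^l = P_1^l ∪ ⋯ ∪ P_n^l`. -/
def PlSet (n : ℕ) (l : ZMod n) : Set (Vert n) := {x | ∃ k m, x = Vert.pv k m l}

/-- `P = P^1 ∪ ⋯ ∪ P^n`. -/
def Pset (n : ℕ) : Set (Vert n) := {x | ∃ k m l, x = Vert.pv k m l}

/-- `T_{l,m} = {v_{1,m}^l, …, v_{n,m}^l}`. -/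
def Tlm (n : ℕ) (l m : ZMod n) : Set (Vert n) := {x | ∃ k, x = Vert.pv k m l}

/-- `Q_i = {w_{i,1}, …, w_{i,n}}`. -/
def QiSet (n : ℕ) (i : {x : ZMod n // x ≠ 0}) : Set (Vert n) := {x | ∃ j, x = Vert.qv i j}

/-- `Q = Q_1 ∪ ⋯ ∪ Q_{n-1}`. -/
def Qset (n : ℕ) : Set (Vert n) := {x | ∃ i j, x = Vert.qv i j}

/-- `R_i = {u_{i,1}, …, u_{i,n}}`. -/
def RiSet (n : ℕ) (i : {x : ZMod n // x ≠ 0}) : Set (Vert n) := {x | ∃ j, x = Vert.rv i j}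

/-- `R = R_1 ∪ ⋯ ∪ R_{n-1}`. -/
def Rset (n : ℕ) : Set (Vert n) := {x | ∃ i j, x = Vert.rv i j}

/-- `S = {s_1, …, s_n}`. -/
def Sset (n : ℕ) : Set (Vert n) := {x | ∃ m, x = Vert.sv m}

/-- `G_l`, the subgraph of `G` induced by `P^l ∪ Q` (kept on the same vertex type:
all edges of `G` with both endpoints in `P^l ∪ Q`). -/
def Gl (n : ℕ) (l : ZMod n) : SimpleGraph (Vert n) where
  Adj x y := (GraphG n).Adj x y ∧ x ∈ PlSet n l ∪ Qset n ∧ y ∈ PlSet n l ∪ Qset n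
  symm := ⟨fun _ _ ⟨h, hx, hy⟩ => ⟨h.symm, hy, hx⟩⟩
  loopless := ⟨fun x h => (GraphG n).irrefl h.1⟩

/-- `G` is `k`-choosable: for every list assignment with all lists of size at least `k`
there is a proper coloring choosing each color from the corresponding list. -/
def Choosable {V : Type*} (G : SimpleGraph V) (k : ℕ) : Prop :=
  ∀ L : V → Finset ℕ, (∀ v, k ≤ (L v).card) →
    ∃ φ : V → ℕ, (∀ v, φ v ∈ L v) ∧ ∀ ⦃v w⦄, G.Adj v w → φ v ≠ φ w

/-- The list chromatic number `χ_ℓ(G)`: the least `k` such that `G` is `k`-choosable. -/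
noncomputable def listChromaticNumber {V : Type*} (G : SimpleGraph V) : ℕ :=
  sInf {k | Choosable G k}


/-- each `Q_i` is an independent set of `G²`: distinct vertices of `Q_i`
are non-adjacent in `G²`, i.e. they have no common neighbor in `G`. -/
theorem stmt_7 (n : ℕ) (hn : n.Prime) (hn3 : 3 ≤ n) (i : {x : ZMod n // x ≠ 0}) :
    ∀ x ∈ QiSet n i, ∀ y ∈ QiSet n i, x ≠ y →
      ¬ (square (GraphG n)).Adj x y ∧
      ¬ ∃ z, (GraphG n).Adj x z ∧ (GraphG n).Adj y z := by
  rintro x ⟨j, rfl⟩ y ⟨j', rfl⟩ hxy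
  have hjj' : j ≠ j' := fun h => hxy (by rw [h])
  have hno : ¬ ∃ z, (GraphG n).Adj (Vert.qv i j) z ∧ (GraphG n).Adj (Vert.qv i j') z := by
    rintro ⟨z, hz1, hz2⟩
    cases z with
    | pv k m l =>
        have h1 : m = latinL n i.1 j k := by
          rcases hz1 with h | h
          · exact h
          · exact absurd h (by simp [rel])
        have h2 : m = latinL n i.1 j' k := by
          rcases hz2 with h | h
          · exact h
          · exact absurd h (by simp [rel])
        apply hjj'
        have := h1.symm.trans h2
        simpa [latinL] using this
    | qv i' j'' => rcases hz1 with h | h <;> simp [GraphG, rel] at h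
    | rv i' j'' => rcases hz1 with h | h <;> simp [GraphG, rel] at h
    | sv m => rcases hz1 with h | h <;> simp [GraphG, rel] at h
  refine ⟨?_, hno⟩
  rintro ⟨-, hadj | ⟨z, hz1, hz2⟩⟩
  · rcases hadj with h | h <;> simp [GraphG, rel] at h
  · exact hno ⟨z, hz1, hz2.symm⟩
end

section
/- Let n ≥ 3 be a prime and let G be the graph of Construction 1. The set S = {s_1,…,s_n} is an independent set of the square G² of G; that is, no two distinct vertices of S have a common neighbor in G. -/
open SimpleGraph

/-- `S` is an independent set of `G²`: distinct vertices of `S`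
are non-adjacent in `G²`, i.e. they have no common neighbor in `G`. -/
theorem stmt_9 (n : ℕ) (hn : n.Prime) (hn3 : 3 ≤ n) :
    ∀ x ∈ Sset n, ∀ y ∈ Sset n, x ≠ y →
      ¬ (square (GraphG n)).Adj x y ∧
      ¬ ∃ z, (GraphG n).Adj x z ∧ (GraphG n).Adj y z := by
  rintro x ⟨a, rfl⟩ y ⟨b, rfl⟩ hxy
  have hab : a ≠ b := fun h => hxy (by rw [h])
  have hnoz : ¬ ∃ z, (GraphG n).Adj (Vert.sv a) z ∧ (GraphG n).Adj (Vert.sv b) z := by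
    rintro ⟨z, h1, h2⟩
    cases z <;> simp [GraphG, rel] at h1 h2
    exact hab (h1.symm.trans h2)
  constructor
  · rintro ⟨-, h | ⟨z, h1, h2⟩⟩
    · simp [GraphG, rel] at h
    · exact hnoz ⟨z, h1, h2.symm⟩
  · exact hnoz
end

section
/- Let n ≥ 3 be a prime and let G be the graph of Construction 1. Then the chromatic number of the square of G satisfies χ(G²) ≤ n² + 2n − 1. -/
open SimpleGraph

/-- Color type: `(k,l)` for `P`, `i` for `Q`, `i` for `R`, one color for `S`. -/
abbrev ColorT (n : ℕ) : Type :=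
  (ZMod n × ZMod n) ⊕ ({x : ZMod n // x ≠ 0} ⊕ ({x : ZMod n // x ≠ 0} ⊕ Unit))

/-- The coloring of `G²`. -/
def colG {n : ℕ} : Vert n → ColorT n
  | .pv k _ l => Sum.inl (k, l)
  | .qv i _ => Sum.inr (Sum.inl i)
  | .rv i _ => Sum.inr (Sum.inr (Sum.inl i))
  | .sv _ => Sum.inr (Sum.inr (Sum.inr ()))

lemma colG_valid {n : ℕ} ⦃v w : Vert n⦄ (h : (square (GraphG n)).Adj v w) :
    colG v ≠ colG w := by
  obtain ⟨hne, hadj⟩ := h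
  intro hc
  cases v with
  | pv k m l =>
    cases w with
    | pv k' m' l' =>
      simp only [colG, Sum.inl.injEq, Prod.mk.injEq] at hc
      obtain ⟨hk, hl⟩ := hc
      subst hk; subst hl
      have hm : m ≠ m' := fun hm => hne (by rw [hm])
      rcases hadj with hd | ⟨z, h1, h2⟩
      · simp [GraphG, rel] at hd
      · cases z with
        | pv a b c => simp [GraphG, rel] at h1
        | qv i j =>
          simp only [GraphG, rel, false_or, or_false] at h1 h2
          exact hm (h1.trans h2.symm)
        | rv i j =>
          simp only [GraphG, rel, false_or, or_false] at h1 h2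
          exact hm (h1.trans h2.symm)
        | sv m'' =>
          simp only [GraphG, rel, false_or, or_false] at h1 h2
          exact hm (h1.trans h2.symm)
    | qv i j => simp [colG] at hc
    | rv i j => simp [colG] at hc
    | sv m' => simp [colG] at hc
  | qv i j =>
    cases w with
    | pv k m l => simp [colG] at hc
    | qv i' j' =>
      simp only [colG, Sum.inr.injEq, Sum.inl.injEq] at hc
      subst hc
      have hj : j ≠ j' := fun hj => hne (by rw [hj])
      rcases hadj with hd | ⟨z, h1, h2⟩
      · simp [GraphG, rel] at hd
      · cases z with
        | pv a b c =>
          simp only [GraphG, rel, false_or, or_false] at h1 h2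
          rw [h1, latinL, latinL] at h2
          exact hj (by linear_combination h2)
        | qv i'' j'' => simp [GraphG, rel] at h1
        | rv i'' j'' => simp [GraphG, rel] at h1
        | sv m'' => simp [GraphG, rel] at h1
    | rv i' j' => simp [colG] at hc
    | sv m' => simp [colG] at hc
  | rv i j =>
    cases w with
    | pv k m l => simp [colG] at hc
    | qv i' j' => simp [colG] at hc
    | rv i' j' =>
      simp only [colG, Sum.inr.injEq, Sum.inl.injEq] at hc
      subst hc
      have hj : j ≠ j' := fun hj => hne (by rw [hj])
      rcases hadj with hd | ⟨z, h1, h2⟩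
      · simp [GraphG, rel] at hd
      · cases z with
        | pv a b c =>
          simp only [GraphG, rel, false_or, or_false] at h1 h2
          rw [h1, latinL, latinL] at h2
          exact hj (by linear_combination h2)
        | qv i'' j'' => simp [GraphG, rel] at h1
        | rv i'' j'' => simp [GraphG, rel] at h1
        | sv m'' => simp [GraphG, rel] at h1
    | sv m' => simp [colG] at hc
  | sv m =>
    cases w with
    | pv k m' l => simp [colG] at hc
    | qv i' j' => simp [colG] at hc
    | rv i' j' => simp [colG] at hc
    | sv m' =>
      have hm : m ≠ m' := fun hm => hne (by rw [hm])
      rcases hadj with hd | ⟨z, h1, h2⟩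
      · simp [GraphG, rel] at hd
      · cases z with
        | pv a b c =>
          simp only [GraphG, rel, false_or, or_false] at h1 h2
          exact hm (h1.symm.trans h2)
        | qv i'' j'' => simp [GraphG, rel] at h1
        | rv i'' j'' => simp [GraphG, rel] at h1
        | sv m'' => simp [GraphG, rel] at h1

/-- `χ(G²) ≤ n² + 2n - 1`. -/
theorem stmt_15 (n : ℕ) (hn : n.Prime) (hn3 : 3 ≤ n) :
    (square (GraphG n)).chromaticNumber ≤ (n ^ 2 + 2 * n - 1 : ℕ) := by
  haveI : NeZero n := ⟨by omega⟩
  have hsub : Fintype.card {x : ZMod n // x ≠ 0} = n - 1 := by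
    rw [Fintype.card_subtype_compl, ZMod.card, Fintype.card_subtype_eq]
  have hcard : Fintype.card (ColorT n) = n ^ 2 + 2 * n - 1 := by
    simp only [Fintype.card_sum, Fintype.card_prod, ZMod.card, Fintype.card_unit, hsub]
    have h2n : n ^ 2 = n * n := sq n
    omega
  have hcol : (square (GraphG n)).Colorable (n ^ 2 + 2 * n - 1) := by
    rw [← hcard]
    exact (SimpleGraph.Coloring.mk colG (fun h => colG_valid h)).colorable
  exact hcol.chromaticNumber_le
end

section
/- Let n ≥ 3 be a prime and let G be the graph of Construction 1. Then the list chromatic number of the square of G satisfies χ_ℓ(G²) > 2(n−1)². -/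
open SimpleGraph

/-! ### Auxiliary material for the proof -/

section AuxChoosable

open Finset

/-- Any graph on a finite vertex type is `|V|`-choosable (greedy coloring). -/
lemma choosable_card {V : Type*} [Fintype V] [DecidableEq V] (G : SimpleGraph V) :
    Choosable G (Fintype.card V) := by
  intro L hL
  suffices h : ∀ s : Finset V, ∃ φ : V → ℕ, (∀ v ∈ s, φ v ∈ L v) ∧
      ∀ v ∈ s, ∀ w ∈ s, G.Adj v w → φ v ≠ φ w by
    obtain ⟨φ, h1, h2⟩ := h Finset.univ
    exact ⟨φ, fun v => h1 v (Finset.mem_univ v),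
      fun v w ha => h2 v (Finset.mem_univ v) w (Finset.mem_univ w) ha⟩
  intro s
  induction s using Finset.induction_on with
  | empty => exact ⟨fun _ => 0, by simp, by simp⟩
  | @insert a s ha ih =>
    obtain ⟨φ, h1, h2⟩ := ih
    have hs : s.card < Fintype.card V := by
      have h3 := Finset.card_le_univ (insert a s)
      rw [Finset.card_insert_of_notMem ha] at h3
      have h4 : (Finset.univ : Finset V).card = Fintype.card V := Finset.card_univ
      omega
    have hnsub : ¬ L a ⊆ s.image φ := by
      intro hsub
      have h4 := Finset.card_le_card hsub
      have h5 := Finset.card_image_le (s := s) (f := φ)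
      have h6 := hL a
      omega
    obtain ⟨c, hc1, hc2⟩ := Finset.not_subset.mp hnsub
    refine ⟨Function.update φ a c, ?_, ?_⟩
    · intro v hv
      rcases Finset.mem_insert.mp hv with hva | hvs
      · rw [hva, Function.update_self]; exact hc1
      · rw [Function.update_of_ne (ne_of_mem_of_not_mem hvs ha)]
        exact h1 v hvs
    · intro v hv w hw hadj
      rcases Finset.mem_insert.mp hv with hva | hvs <;>
        rcases Finset.mem_insert.mp hw with hwa | hws
      · rw [hva, hwa] at hadj; exact absurd hadj (G.loopless.irrefl a)
      · rw [hva, Function.update_self,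
          Function.update_of_ne (ne_of_mem_of_not_mem hws ha)]
        intro hc
        exact hc2 (by rw [hc]; exact Finset.mem_image_of_mem φ hws)
      · rw [hwa, Function.update_self,
          Function.update_of_ne (ne_of_mem_of_not_mem hvs ha)]
        intro hc
        exact hc2 (by rw [← hc]; exact Finset.mem_image_of_mem φ hvs)
      · rw [Function.update_of_ne (ne_of_mem_of_not_mem hvs ha),
          Function.update_of_ne (ne_of_mem_of_not_mem hws ha)]
        exact h2 v hvs w hws hadj

/-- `Vert n` is equivalent to an explicit sum of finite types. -/
def vertEquiv (n : ℕ) : Vert n ≃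
    ((ZMod n × ZMod n × ZMod n) ⊕ ({x : ZMod n // x ≠ 0} × ZMod n)
      ⊕ ({x : ZMod n // x ≠ 0} × ZMod n) ⊕ ZMod n) where
  toFun v := match v with
    | .pv k m l => Sum.inl (k, m, l)
    | .qv i j => Sum.inr (Sum.inl (i, j))
    | .rv i j => Sum.inr (Sum.inr (Sum.inl (i, j)))
    | .sv m => Sum.inr (Sum.inr (Sum.inr m))
  invFun x := match x with
    | Sum.inl (k, m, l) => .pv k m l
    | Sum.inr (Sum.inl (i, j)) => .qv i j
    | Sum.inr (Sum.inr (Sum.inl (i, j))) => .rv i j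
    | Sum.inr (Sum.inr (Sum.inr m)) => .sv m
  left_inv v := by cases v <;> rfl
  right_inv x := by rcases x with ⟨k, m, l⟩ | ⟨i, j⟩ | ⟨i, j⟩ | m <;> rfl

end AuxChoosable

section AuxLower

open Finset

lemma filter_mod_eq_card {n : ℕ} (a r : ℕ) (hn : 0 < n) (hr : r < n) :
    ((Finset.range (a * n)).filter (fun c => c % n = r)).card = a := by
  have himg : ((Finset.range (a * n)).filter (fun c => c % n = r))
      = (Finset.range a).image (fun q => q * n + r) := by
    ext c
    simp only [mem_filter, mem_range, mem_image]
    constructor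
    · rintro ⟨hlt, hmod⟩
      refine ⟨c / n, Nat.div_lt_of_lt_mul (by rwa [mul_comm] at hlt), ?_⟩
      rw [← hmod, mul_comm (c / n) n]
      exact Nat.div_add_mod c n
    · rintro ⟨q, hq, rfl⟩
      refine ⟨?_, ?_⟩
      · calc q * n + r < (q + 1) * n := by rw [add_mul, one_mul]; omega
          _ ≤ a * n := Nat.mul_le_mul_right n hq
      · rw [Nat.add_comm, Nat.add_mul_mod_self_right]
        exact Nat.mod_eq_of_lt hr
  rw [himg, Finset.card_image_of_injective _ ?_, Finset.card_range]
  intro x y h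
  have h' : x * n + r = y * n + r := h
  exact Nat.eq_of_mul_eq_mul_right hn (by omega)

/-- The bad list assignment: vertex `v_{k,m}^l` gets all colors `c < 2(n-1)n`
whose block `c % n` differs from `m`; other vertices get an arbitrary list
of size `2(n-1)²`. -/
def badL (n : ℕ) : Vert n → Finset ℕ
  | .pv _ m _ => (Finset.range (2*(n-1)*n)).filter (fun c => ¬ c % n = m.val)
  | _ => Finset.range (2*(n-1)*(n-1))

lemma badL_card {n : ℕ} (hn : 0 < n) (v : Vert n) : 2*(n-1)*(n-1) ≤ (badL n v).card := by
  haveI : NeZero n := ⟨hn.ne'⟩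
  obtain ⟨p, rfl⟩ : ∃ p, n = p + 1 := ⟨n - 1, by omega⟩
  cases v with
  | pv k m l =>
    have h1 := filter_mod_eq_card (n := p + 1) (2*p) m.val hn (ZMod.val_lt m)
    show 2*(p+1-1)*(p+1-1) ≤
      ((Finset.range (2*(p+1-1)*(p+1))).filter (fun c => ¬ c % (p+1) = m.val)).card
    simp only [Nat.add_sub_cancel]
    rw [Finset.filter_not, Finset.card_sdiff_of_subset (Finset.filter_subset _ _),
      Finset.card_range, h1]
    have h3 : 2*p*p + 2*p = 2*p*(p+1) := by ring
    omega
  | qv i j => simp [badL]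
  | rv i j => simp [badL]
  | sv m => simp [badL]

/-- Any two `P`-vertices lying in different parts `P_k^l` are adjacent in `G²`. -/
lemma adj_of_ne_part {n : ℕ} (hp : n.Prime) {k m l k' m' l' : ZMod n}
    (h : ¬ (k = k' ∧ l = l')) :
    (square (GraphG n)).Adj (Vert.pv k m l) (Vert.pv k' m' l') := by
  haveI := Fact.mk hp
  show Vert.pv k m l ≠ Vert.pv k' m' l' ∧ ((GraphG n).Adj _ _ ∨ ∃ z, (GraphG n).Adj (Vert.pv k m l) z ∧ (GraphG n).Adj z (Vert.pv k' m' l'))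
  refine ⟨by intro hc; injection hc with h1 h2 h3; exact h ⟨h1, h3⟩, Or.inr ?_⟩
  by_cases hm : m = m'
  · exact ⟨Vert.sv m', Or.inr hm, Or.inl rfl⟩
  · by_cases hk : k = k'
    · have hl : l ≠ l' := fun hl => h ⟨hk, hl⟩
      have hll : l - l' ≠ 0 := sub_ne_zero.mpr hl
      set i : ZMod n := (m - m') * (l - l')⁻¹ with hidef
      have hi0 : i ≠ 0 := mul_ne_zero (sub_ne_zero.mpr hm) (inv_ne_zero hll)
      have hkey : i * (l - l') = m - m' := by
        rw [hidef, mul_assoc, inv_mul_cancel₀ hll, mul_one]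
      refine ⟨Vert.rv ⟨i, hi0⟩ (m - i * (l - 1)), Or.inr ?_, Or.inl ?_⟩
      · show m = latinL n i (m - i*(l-1)) l
        unfold latinL; ring
      · show m' = latinL n i (m - i*(l-1)) l'
        unfold latinL; linear_combination hkey
    · have hkk : k - k' ≠ 0 := sub_ne_zero.mpr hk
      set i : ZMod n := (m - m') * (k - k')⁻¹ with hidef
      have hi0 : i ≠ 0 := mul_ne_zero (sub_ne_zero.mpr hm) (inv_ne_zero hkk)
      have hkey : i * (k - k') = m - m' := by
        rw [hidef, mul_assoc, inv_mul_cancel₀ hkk, mul_one]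
      refine ⟨Vert.qv ⟨i, hi0⟩ (m - i * (k - 1)), Or.inr ?_, Or.inl ?_⟩
      · show m = latinL n i (m - i*(k-1)) k
        unfold latinL; ring
      · show m' = latinL n i (m - i*(k-1)) k'
        unfold latinL; linear_combination hkey

lemma not_choosable {n : ℕ} (hp : n.Prime) (hn3 : 3 ≤ n) :
    ¬ Choosable (square (GraphG n)) (2*(n-1)*(n-1)) := by
  haveI : NeZero n := ⟨by omega⟩
  intro h
  obtain ⟨φ, hmem, hadj⟩ := h (badL n) (badL_card (by omega))
  classical
  set T : ZMod n × ZMod n → Finset ℕ :=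
    fun p => Finset.univ.image (fun m : ZMod n => φ (Vert.pv p.1 m p.2)) with hT
  have hsub : ∀ p, T p ⊆ Finset.range (2*(n-1)*n) := by
    intro p c hc
    simp only [hT, Finset.mem_image] at hc
    obtain ⟨m, _, rfl⟩ := hc
    have h5 := hmem (Vert.pv p.1 m p.2)
    simp only [badL, Finset.mem_filter, Finset.mem_range] at h5
    exact Finset.mem_range.mpr h5.1
  have htwo : ∀ p, 2 ≤ (T p).card := by
    intro p
    by_contra hcon
    push_neg at hcon
    have hne : (T p).Nonempty :=
      ⟨_, Finset.mem_image_of_mem _ (Finset.mem_univ (0 : ZMod n))⟩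
    have hone : (T p).card = 1 := by
      have := Finset.card_pos.mpr hne; omega
    obtain ⟨c, hc⟩ := Finset.card_eq_one.mp hone
    have hall : ∀ m : ZMod n, φ (Vert.pv p.1 m p.2) = c := by
      intro m
      have hmm : φ (Vert.pv p.1 m p.2) ∈ T p :=
        Finset.mem_image_of_mem _ (Finset.mem_univ m)
      rw [hc] at hmm; simpa using hmm
    have hm := hmem (Vert.pv p.1 ((c : ZMod n)) p.2)
    simp only [badL, Finset.mem_filter, Finset.mem_range] at hm
    apply hm.2
    rw [hall, ZMod.val_natCast]
  have hdisj : ∀ p ∈ (Finset.univ : Finset (ZMod n × ZMod n)), ∀ q ∈ Finset.univ,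
      p ≠ q → Disjoint (T p) (T q) := by
    intro p _ q _ hpq
    rw [Finset.disjoint_left]
    intro c hcp hcq
    simp only [hT, Finset.mem_image] at hcp hcq
    obtain ⟨m1, _, h1⟩ := hcp
    obtain ⟨m2, _, h2⟩ := hcq
    have hne : ¬ (p.1 = q.1 ∧ p.2 = q.2) := by
      intro ⟨e1, e2⟩; exact hpq (Prod.ext e1 e2)
    exact hadj (adj_of_ne_part hp hne) (h1.trans h2.symm)
  have hcard := Finset.card_biUnion hdisj
  have hle : (Finset.univ.biUnion T).card ≤ 2*(n-1)*n := by
    refine le_trans (Finset.card_le_card ?_) (Finset.card_range _).le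
    exact Finset.biUnion_subset.mpr fun p _ => hsub p
  have hge : (Finset.univ : Finset (ZMod n × ZMod n)).card * 2 ≤ ∑ p, (T p).card := by
    have h7 := Finset.card_nsmul_le_sum (Finset.univ : Finset (ZMod n × ZMod n))
      (fun p => (T p).card) 2 (fun p _ => htwo p)
    simpa [smul_eq_mul] using h7
  have hcu : (Finset.univ : Finset (ZMod n × ZMod n)).card = n * n := by
    rw [Finset.card_univ, Fintype.card_prod, ZMod.card]
  rw [hcu] at hge
  rw [hcard] at hle
  have hfin : 2*(n-1)*n < n*n*2 := by
    have h8 : 2*(n-1) < 2*n := by omega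
    have h9 : (0:ℕ) < n := by omega
    calc 2*(n-1)*n < 2*n*n := (Nat.mul_lt_mul_right h9).mpr h8
      _ = n*n*2 := by ring
  omega

end AuxLower

/-- `χ_ℓ(G²) > 2(n-1)²`. -/
theorem stmt_16 (n : ℕ) (hn : n.Prime) (hn3 : 3 ≤ n) :
    2 * (n - 1) ^ 2 < listChromaticNumber (square (GraphG n)) := by
  haveI : NeZero n := ⟨by omega⟩
  haveI : Fintype (Vert n) := Fintype.ofEquiv _ (vertEquiv n).symm
  haveI : DecidableEq (Vert n) := Classical.decEq _
  have hne : {k | Choosable (square (GraphG n)) k}.Nonempty :=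
    ⟨Fintype.card (Vert n), choosable_card _⟩
  by_contra hcon
  push_neg at hcon
  have hmem := Nat.sInf_mem hne
  have hch : Choosable (square (GraphG n)) (2*(n-1)*(n-1)) := by
    intro L hL
    refine hmem L (fun v => le_trans ?_ (hL v))
    have heq : 2*(n-1)^2 = 2*(n-1)*(n-1) := by ring
    calc sInf {k | Choosable (square (GraphG n)) k}
        ≤ 2*(n-1)^2 := hcon
      _ = 2*(n-1)*(n-1) := heq
  exact not_choosable hn hn3 hch
end

section
/- Let n ≥ 3 be a prime and let G be the graph of Construction 1. Then G is bipartite with partite sets P and Q ∪ R ∪ S, every vertex x ∈ P has degree 2n − 1 in G, and every vertex y ∈ Q ∪ R ∪ S has degree n² in G. -/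
open SimpleGraph

lemma my_ncard_range {α β : Type*} (f : α → β) (hf : Function.Injective f) :
    (Set.range f).ncard = Nat.card α := by
  rw [← Nat.card_coe_set_eq, Nat.card_range_of_injective hf]


/-- `G` is bipartite with partite sets `P` and `Q ∪ R ∪ S` (every edge
joins `P` to `Q ∪ R ∪ S`), every vertex of `P` has degree `2n - 1`, and every vertex of
`Q ∪ R ∪ S` has degree `n²`. -/
theorem stmt_18 (n : ℕ) (hn : n.Prime) (hn3 : 3 ≤ n) :
    (∀ x y : Vert n, (GraphG n).Adj x y →
      (x ∈ Pset n ∧ y ∈ Qset n ∪ Rset n ∪ Sset n) ∨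
      (y ∈ Pset n ∧ x ∈ Qset n ∪ Rset n ∪ Sset n)) ∧
    (∀ x ∈ Pset n, ((GraphG n).neighborSet x).ncard = 2 * n - 1) ∧
    (∀ y ∈ Qset n ∪ Rset n ∪ Sset n, ((GraphG n).neighborSet y).ncard = n ^ 2) := by
  haveI : NeZero n := ⟨by omega⟩
  have hadj : ∀ a b : Vert n, (GraphG n).Adj a b ↔ rel a b ∨ rel b a := fun _ _ => Iff.rfl
  have hcard1 : Nat.card {x : ZMod n // x ≠ 0} = n - 1 := by
    simp [Nat.card_eq_fintype_card, Fintype.card_subtype_compl, ZMod.card]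
  refine ⟨?_, ?_, ?_⟩
  · intro x y h
    have key : ∀ a b : Vert n, rel a b →
        b ∈ Pset n ∧ a ∈ Qset n ∪ Rset n ∪ Sset n := by
      rintro (⟨k,m,l⟩|⟨i,j⟩|⟨i,j⟩|⟨m⟩) (⟨k',m',l'⟩|⟨i',j'⟩|⟨i',j'⟩|⟨m'⟩) h <;>
        first
        | exact ⟨⟨_, _, _, rfl⟩, Or.inl (Or.inl ⟨_, _, rfl⟩)⟩
        | exact ⟨⟨_, _, _, rfl⟩, Or.inl (Or.inr ⟨_, _, rfl⟩)⟩
        | exact ⟨⟨_, _, _, rfl⟩, Or.inr ⟨_, rfl⟩⟩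
        | exact False.elim h
    rcases h with h | h
    · exact Or.inr (key _ _ h)
    · exact Or.inl (key _ _ h)
  · rintro x ⟨k, m, l, rfl⟩
    set f : ({x : ZMod n // x ≠ 0} ⊕ {x : ZMod n // x ≠ 0} ⊕ Unit) → Vert n := fun t =>
      match t with
      | .inl i => .qv i (m - i.1 * (k - 1))
      | .inr (.inl i) => .rv i (m - i.1 * (l - 1))
      | .inr (.inr _) => .sv m with hfdef
    have hinj : Function.Injective f := by
      rintro (a|a|⟨⟩) (b|b|⟨⟩) h <;> simp only [hfdef] at h <;>
        first
          | rfl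
          | (rw [Vert.qv.injEq] at h; simp [h.1])
          | (rw [Vert.rv.injEq] at h; simp [h.1])
          | simp at h
    have hset : (GraphG n).neighborSet (Vert.pv k m l) = Set.range f := by
      ext y
      rw [mem_neighborSet, hadj]
      rcases y with ⟨k',m',l'⟩|⟨i',j'⟩|⟨i',j'⟩|⟨m'⟩ <;>
        simp only [rel, latinL, or_false, false_or, Set.mem_range, hfdef]
      · constructor
        · rintro h; exact h.elim
        · rintro ⟨(t|t|t), ht⟩ <;> simp at ht
      · constructor
        · rintro h
          exact ⟨Sum.inl i', by simp [eq_sub_of_add_eq h.symm]⟩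
        · rintro ⟨(t|t|t), ht⟩ <;> simp at ht
          obtain ⟨h1, h2⟩ := ht
          subst h1
          rw [← h2]; ring
      · constructor
        · rintro h
          exact ⟨Sum.inr (Sum.inl i'), by simp [eq_sub_of_add_eq h.symm]⟩
        · rintro ⟨(t|t|t), ht⟩ <;> simp at ht
          obtain ⟨h1, h2⟩ := ht
          subst h1
          rw [← h2]; ring
      · constructor
        · rintro h
          exact ⟨Sum.inr (Sum.inr ()), by simp [h]⟩
        · rintro ⟨(t|t|t), ht⟩ <;> simp at ht
          exact ht
    rw [hset, my_ncard_range _ hinj, Nat.card_sum, Nat.card_sum, hcard1, Nat.card_unique]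
    omega
  · intro y hy
    have key : ∀ g : ZMod n × ZMod n → Vert n, Function.Injective g →
        (GraphG n).neighborSet y = Set.range g →
        ((GraphG n).neighborSet y).ncard = n ^ 2 := by
      intro g hg hs
      rw [hs, my_ncard_range _ hg, Nat.card_eq_fintype_card]
      simp [ZMod.card, sq]
    rcases hy with (⟨i, j, rfl⟩ | ⟨i, j, rfl⟩) | ⟨m, rfl⟩
    · refine key (fun p => .pv p.1 (latinL n i.1 j p.1) p.2) ?_ ?_
      · rintro ⟨a1, a2⟩ ⟨b1, b2⟩ h
        simp only [Vert.pv.injEq] at h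
        simp [h.1, h.2.2]
      · ext z
        rw [mem_neighborSet, hadj]
        rcases z with ⟨k',m',l'⟩|⟨i',j'⟩|⟨i',j'⟩|⟨m'⟩ <;>
          simp only [rel, or_false, false_or, or_self, Set.mem_range, Prod.exists,
            Vert.pv.injEq]
        · constructor
          · rintro h; exact ⟨k', l', rfl, h.symm, rfl⟩
          · rintro ⟨a, b, rfl, h2, rfl⟩; exact h2.symm
        all_goals
          (constructor
           · rintro h; exact h.elim
           · rintro ⟨a, b, h⟩; exact absurd h (by simp))
    · refine key (fun p => .pv p.1 (latinL n i.1 j p.2) p.2) ?_ ?_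
      · rintro ⟨a1, a2⟩ ⟨b1, b2⟩ h
        simp only [Vert.pv.injEq] at h
        simp [h.1, h.2.2]
      · ext z
        rw [mem_neighborSet, hadj]
        rcases z with ⟨k',m',l'⟩|⟨i',j'⟩|⟨i',j'⟩|⟨m'⟩ <;>
          simp only [rel, or_false, false_or, or_self, Set.mem_range, Prod.exists,
            Vert.pv.injEq]
        · constructor
          · rintro h; exact ⟨k', l', rfl, h.symm, rfl⟩
          · rintro ⟨a, b, rfl, h2, rfl⟩; exact h2.symm
        all_goals
          (constructor
           · rintro h; exact h.elim
           · rintro ⟨a, b, h⟩; exact absurd h (by simp))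
    · refine key (fun p => .pv p.1 m p.2) ?_ ?_
      · rintro ⟨a1, a2⟩ ⟨b1, b2⟩ h
        simp only [Vert.pv.injEq] at h
        simp [h.1, h.2.2]
      · ext z
        rw [mem_neighborSet, hadj]
        rcases z with ⟨k',m',l'⟩|⟨i',j'⟩|⟨i',j'⟩|⟨m'⟩ <;>
          simp only [rel, or_false, false_or, or_self, Set.mem_range, Prod.exists,
            Vert.pv.injEq]
        · constructor
          · rintro h; exact ⟨k', l', rfl, h.symm, rfl⟩
          · rintro ⟨a, b, rfl, h2, rfl⟩; exact h2.symm
        all_goals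
          (constructor
           · rintro h; exact h.elim
           · rintro ⟨a, b, h⟩; exact absurd h (by simp))
end
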